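/- Let p₁ = [0:1], p₂ = [1:1], p₃ = [2:1], p₄ = [3:1], p₅ = [6:1] in ℙ¹(ℚ). Suppose h₁, h₂, h₃ ∈ PGL₂(ℚ) satisfy: h₁ exchanges p₁ with p₃ and exchanges p₄ with p₅ (i.e., h₁(p₁) = p₃, h₁(p₃) = p₁, h₁(p₄) = p₅, h₁(p₅) = p₄); h₂ exchanges p₂ with p₄ and exchanges p₃ with p₅; and h₃ exchanges p₁ with p₅ and exchanges p₂ with p₃. Then the composition h₁ ∘ h₂ ∘ h₃ equals τ, the class in PGL₂(ℚ) of the matrix with rows (3,0) and (0,1), i.e., the Möbius transformation z ↦ 3z. -/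

import Mathlib

open Matrix

noncomputable section

/-- The projective line `ℙ¹(K)` over a field `K`, as the projectivization of `K²`. -/
abbrev P1 (K : Type*) [Field K] : Type _ := Projectivization K (Fin 2 → K)

/-- `PGL₂(K)`: the quotient of `GL₂(K)` by its center. -/
abbrev PGL2 (K : Type*) [Field K] : Type _ :=
  GL (Fin 2) K ⧸ Subgroup.center (GL (Fin 2) K)

namespace PGL2

variable {K : Type*} [Field K]

/-- The linear automorphism of `K²` attached to an element of `GL₂(K)`. -/
def glEquiv (g : GL (Fin 2) K) : (Fin 2 → K) ≃ₗ[K] (Fin 2 → K) :=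
  (Matrix.GeneralLinearGroup.toLin g).toLinearEquiv

lemma glEquiv_apply (g : GL (Fin 2) K) (v : Fin 2 → K) :
    glEquiv g v = (g : Matrix (Fin 2) (Fin 2) K).mulVec v := rfl

/-- `GL₂(K)` acts on `ℙ¹(K)` by Möbius transformations. -/
instance : SMul (GL (Fin 2) K) (P1 K) :=
  ⟨fun g => Projectivization.map (glEquiv g).toLinearMap (glEquiv g).injective⟩

lemma gl_smul_mk (g : GL (Fin 2) K) (v : Fin 2 → K) (hv : v ≠ 0) :
    g • Projectivization.mk K v hv
      = Projectivization.mk K ((g : Matrix (Fin 2) (Fin 2) K).mulVec v)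
          (by have h0 := (glEquiv g).injective.ne hv
              rwa [map_zero, glEquiv_apply] at h0) :=
  Projectivization.map_mk (glEquiv g).toLinearMap (glEquiv g).injective v hv

instance : MulAction (GL (Fin 2) K) (P1 K) where
  one_smul x := by
    induction x using Projectivization.ind with
    | h v hv => rw [gl_smul_mk]; simp
  mul_smul g h x := by
    induction x using Projectivization.ind with
    | h v hv =>
      rw [gl_smul_mk, gl_smul_mk, gl_smul_mk]; congr 1; rw [Matrix.mulVec_mulVec]; rfl

lemma exists_scalar_of_mem_center (g : GL (Fin 2) K)
    (hg : g ∈ Subgroup.center (GL (Fin 2) K)) :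
    ∃ a : K, (g : Matrix (Fin 2) (Fin 2) K) = a • (1 : Matrix (Fin 2) (Fin 2) K) := by
  have hmem := Subgroup.mem_center_iff.mp hg
  set A : Matrix (Fin 2) (Fin 2) K := (g : Matrix (Fin 2) (Fin 2) K) with hA
  have hUdet : ((!![1, 1; 0, 1] : Matrix (Fin 2) (Fin 2) K)).det ≠ 0 := by
    norm_num [Matrix.det_fin_two_of]
  have hLdet : ((!![1, 0; 1, 1] : Matrix (Fin 2) (Fin 2) K)).det ≠ 0 := by
    norm_num [Matrix.det_fin_two_of]
  have hU := congrArg Units.val (hmem (Matrix.GeneralLinearGroup.mkOfDetNeZero _ hUdet))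
  have hL := congrArg Units.val (hmem (Matrix.GeneralLinearGroup.mkOfDetNeZero _ hLdet))
  have hU' : (!![1, 1; 0, 1] : Matrix (Fin 2) (Fin 2) K) * A = A * !![1, 1; 0, 1] := hU
  have hL' : (!![1, 0; 1, 1] : Matrix (Fin 2) (Fin 2) K) * A = A * !![1, 0; 1, 1] := hL
  have e1 := congrFun (congrFun hU' 0) 0
  have e2 := congrFun (congrFun hU' 0) 1
  have e3 := congrFun (congrFun hL' 0) 0
  simp [Matrix.mul_apply, Fin.sum_univ_two] at e1 e2 e3
  refine ⟨A 0 0, ?_⟩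
  ext i j
  fin_cases i <;> fin_cases j <;>
    simp [Matrix.one_apply] <;> first | exact e3 | exact e1 | linear_combination e2



lemma center_smul_eq (g : GL (Fin 2) K) (hg : g ∈ Subgroup.center (GL (Fin 2) K))
    (x : P1 K) : g • x = x := by
  obtain ⟨a, hA⟩ := exists_scalar_of_mem_center g hg
  have ha : a ≠ 0 := by
    intro h
    subst h
    have : IsUnit (g : Matrix (Fin 2) (Fin 2) K).det := ⟨Matrix.GeneralLinearGroup.det g, rfl⟩
    rw [hA] at this
    simp at this
  induction x using Projectivization.ind with
  | h v hv =>
    rw [gl_smul_mk]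
    rw [Projectivization.mk_eq_mk_iff]
    exact ⟨Units.mk0 a ha, by
      ext i; fin_cases i <;> simp [hA, Matrix.mulVec, dotProduct, Fin.sum_univ_two, Units.smul_def]⟩

/-- `PGL₂(K)` acts on `ℙ¹(K)` by Möbius transformations. -/
def toPerm : PGL2 K →* Equiv.Perm (P1 K) :=
  QuotientGroup.lift _ (MulAction.toPermHom (GL (Fin 2) K) (P1 K))
    (fun g hg => Equiv.ext fun x => center_smul_eq g hg x)

instance : SMul (PGL2 K) (P1 K) := ⟨fun g x => toPerm g x⟩

lemma smul_def (g : PGL2 K) (x : P1 K) : g • x = toPerm g x := rfl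

instance : MulAction (PGL2 K) (P1 K) where
  one_smul x := by simp [smul_def]
  mul_smul g h x := by simp [smul_def]

/-- The class in `PGL₂(K)` of a matrix with nonzero determinant. -/
def cls (M : Matrix (Fin 2) (Fin 2) K) (h : M.det ≠ 0) : PGL2 K :=
  QuotientGroup.mk (Matrix.GeneralLinearGroup.mkOfDetNeZero M h)

lemma cls_smul_mk (M : Matrix (Fin 2) (Fin 2) K) (h : M.det ≠ 0) (v : Fin 2 → K)
    (hv : v ≠ 0) (hMv : M.mulVec v ≠ 0) :
    cls M h • Projectivization.mk K v hv = Projectivization.mk K (M.mulVec v) hMv := by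
  rw [smul_def, cls]
  show (Matrix.GeneralLinearGroup.mkOfDetNeZero M h) • Projectivization.mk K v hv = _
  rw [gl_smul_mk]
  rfl

lemma vec_ne_zero (a : K) : ![a, (1 : K)] ≠ 0 := fun h => by simpa using congrFun h 1

/-- The affine point `[z : 1]` of `ℙ¹(K)`. -/
def affPt (z : K) : P1 K := Projectivization.mk K ![z, 1] (vec_ne_zero z)

/-- The point `[a : b]` of `ℙ¹(K)`. -/
def pt (a b : K) (h : ![a, b] ≠ 0) : P1 K := Projectivization.mk K ![a, b] h

end PGL2


namespace PGL2

lemma cls_smul_affPt (M : Matrix (Fin 2) (Fin 2) ℚ) (h : M.det ≠ 0) (z w : ℚ)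
    (ht : M 1 0 * z + M 1 1 ≠ 0)
    (hw : M 0 0 * z + M 0 1 = w * (M 1 0 * z + M 1 1)) :
    cls M h • affPt z = affPt w := by
  have hmv : M.mulVec ![z, 1] = ![M 0 0 * z + M 0 1, M 1 0 * z + M 1 1] := by
    funext i
    fin_cases i <;> simp [Matrix.mulVec, dotProduct, Fin.sum_univ_two]
  have hne : M.mulVec ![z, 1] ≠ 0 := by
    rw [hmv]; intro hc; exact ht (by simpa using congrFun hc 1)
  rw [affPt, cls_smul_mk M h _ _ hne, affPt, Projectivization.mk_eq_mk_iff]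
  refine ⟨Units.mk0 (M 1 0 * z + M 1 1) ht, ?_⟩
  rw [hmv]
  funext i
  fin_cases i <;> simp [Units.smul_def] <;> linear_combination -hw

lemma fix012 (g : PGL2 ℚ) (h0 : g • affPt (0 : ℚ) = affPt 0)
    (h1 : g • affPt (1 : ℚ) = affPt 1) (h2 : g • affPt (2 : ℚ) = affPt 2) :
    g = 1 := by
  obtain ⟨G, rfl⟩ := QuotientGroup.mk_surjective g
  have key : ∀ x : P1 ℚ, (QuotientGroup.mk G : PGL2 ℚ) • x = G • x := fun _ => rfl
  have extract : ∀ a : ℚ, (QuotientGroup.mk G : PGL2 ℚ) • affPt a = affPt a →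
      (G : Matrix (Fin 2) (Fin 2) ℚ) 0 0 * a + (G : Matrix (Fin 2) (Fin 2) ℚ) 0 1
        = ((G : Matrix (Fin 2) (Fin 2) ℚ) 1 0 * a
            + (G : Matrix (Fin 2) (Fin 2) ℚ) 1 1) * a := by
    intro a ha
    rw [key, affPt, gl_smul_mk, Projectivization.mk_eq_mk_iff] at ha
    obtain ⟨u, hu⟩ := ha
    have e0 := congrFun hu 0
    have e1 := congrFun hu 1
    simp [Units.smul_def, Matrix.mulVec, dotProduct, Fin.sum_univ_two] at e0 e1
    rw [← e0, ← e1]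
    try ring
  have q0 := extract 0 h0
  have q1 := extract 1 h1
  have q2 := extract 2 h2
  set A := (G : Matrix (Fin 2) (Fin 2) ℚ) with hA
  have hq : A 0 1 = 0 := by linarith
  have hr : A 1 0 = 0 := by linarith
  have hs : A 1 1 = A 0 0 := by linarith
  have hscalar : A = A 0 0 • (1 : Matrix (Fin 2) (Fin 2) ℚ) := by
    ext i j
    fin_cases i <;> fin_cases j <;> simp [Matrix.one_apply, hq, hr, hs]
  rw [QuotientGroup.eq_one_iff, Subgroup.mem_center_iff]
  intro h
  ext : 1
  show (h : Matrix (Fin 2) (Fin 2) ℚ) * A = A * (h : Matrix (Fin 2) (Fin 2) ℚ)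
  rw [hscalar]
  simp [Matrix.mul_smul, Matrix.smul_mul]

end PGL2

open PGL2 in
/-- With `p₁ = 0`, `p₂ = 1`, `p₃ = 2`, `p₄ = 3`, `p₅ = 6` on `ℙ¹(ℚ)`, if `h₁` exchanges
`p₁ ↔ p₃` and `p₄ ↔ p₅`, `h₂` exchanges `p₂ ↔ p₄` and `p₃ ↔ p₅`, and `h₃` exchanges
`p₁ ↔ p₅` and `p₂ ↔ p₃`, then `h₁ h₂ h₃` is the Möbius transformation `z ↦ 3z`. -/
theorem composition_of_involutions_eq_tau (h₁ h₂ h₃ : PGL2 ℚ)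
    (h₁a : h₁ • affPt (0 : ℚ) = affPt 2) (h₁b : h₁ • affPt (2 : ℚ) = affPt 0)
    (h₁c : h₁ • affPt (3 : ℚ) = affPt 6) (h₁d : h₁ • affPt (6 : ℚ) = affPt 3)
    (h₂a : h₂ • affPt (1 : ℚ) = affPt 3) (h₂b : h₂ • affPt (3 : ℚ) = affPt 1)
    (h₂c : h₂ • affPt (2 : ℚ) = affPt 6) (h₂d : h₂ • affPt (6 : ℚ) = affPt 2)
    (h₃a : h₃ • affPt (0 : ℚ) = affPt 6) (h₃b : h₃ • affPt (6 : ℚ) = affPt 0)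
    (h₃c : h₃ • affPt (1 : ℚ) = affPt 2) (h₃d : h₃ • affPt (2 : ℚ) = affPt 1) :
    h₁ * h₂ * h₃ = cls !![(3 : ℚ), 0; 0, 1] (by norm_num [Matrix.det_fin_two_of]) := by

  set τ := cls !![(3 : ℚ), 0; 0, 1] (by norm_num [Matrix.det_fin_two_of]) with hτ
  have τ0 : τ • affPt (0 : ℚ) = affPt 0 := by
    rw [hτ]; exact cls_smul_affPt _ _ _ _ (by norm_num) (by norm_num)
  have τ1 : τ • affPt (1 : ℚ) = affPt 3 := by
    rw [hτ]; exact cls_smul_affPt _ _ _ _ (by norm_num) (by norm_num)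
  have τ2 : τ • affPt (2 : ℚ) = affPt 6 := by
    rw [hτ]; exact cls_smul_affPt _ _ _ _ (by norm_num) (by norm_num)
  have key : τ⁻¹ * (h₁ * h₂ * h₃) = 1 := by
    apply fix012
    · rw [mul_smul, mul_smul, mul_smul, h₃a, h₂d, h₁b]; exact inv_smul_eq_iff.mpr τ0.symm
    · rw [mul_smul, mul_smul, mul_smul, h₃c, h₂c, h₁d]; exact inv_smul_eq_iff.mpr τ1.symm
    · rw [mul_smul, mul_smul, mul_smul, h₃d, h₂a, h₁c]; exact inv_smul_eq_iff.mpr τ2.symm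
  exact (inv_mul_eq_one.mp key).symm
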